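/- Maximin value via convex hull: let S ⊆ ℝ^d (d = M−1) be a nonempty compact set of divergence vectors of deterministic quantizers, and let C = convexHull(S) be the set of divergence vectors achievable by randomized quantizers. Then sup over v ∈ C of (min over coordinates of v) is attained, and it is attained at a point of C that can be written as a convex combination of at most d points of S. -/

import Mathlib

private lemma pad_sum {n N : ℕ} (h : n ≤ N) {M : Type*} [AddCommMonoid M] (f : Fin n → M) :
    (∑ j : Fin N, if hj : (j : ℕ) < n then f ⟨j, hj⟩ else 0) = ∑ i : Fin n, f i := by
  set F : ℕ → M := fun j => if hj : j < n then f ⟨j, hj⟩ else 0 with hF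
  have h1 : (∑ j : Fin N, if hj : (j : ℕ) < n then f ⟨j, hj⟩ else 0) = ∑ j ∈ Finset.range N, F j := by
    rw [← Fin.sum_univ_eq_sum_range]
  have h2 : ∑ j ∈ Finset.range n, F j = ∑ j ∈ Finset.range N, F j := by
    apply Finset.sum_subset (Finset.range_subset_range.2 h)
    intro x _ hx
    simp only [Finset.mem_range, not_lt] at hx
    simp [hF, Nat.not_lt.2 hx]
  have h3 : ∑ j ∈ Finset.range n, F j = ∑ i : Fin n, f i := by
    rw [← Fin.sum_univ_eq_sum_range]
    apply Finset.sum_congr rfl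
    intro i _
    simp [hF, i.isLt]
  rw [h1, ← h2, h3]

private lemma isCompact_convexHull_fd {d : ℕ} {S : Set (Fin d → ℝ)} (hS : S.Nonempty)
    (hSc : IsCompact S) : IsCompact (convexHull ℝ S) := by
  classical
  obtain ⟨s₀, hs₀⟩ := hS
  set N := d + 1 with hN
  set T : Set ((Fin N → ℝ) × (Fin N → Fin d → ℝ)) :=
    (stdSimplex ℝ (Fin N)) ×ˢ (Set.pi Set.univ fun _ => S) with hT
  have hTc : IsCompact T := (isCompact_stdSimplex _ _).prod (isCompact_univ_pi fun _ => hSc)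
  set g : (Fin N → ℝ) × (Fin N → Fin d → ℝ) → (Fin d → ℝ) :=
    fun p => ∑ i, p.1 i • p.2 i with hg
  have hgc : Continuous g := by
    apply continuous_finset_sum
    intro i _
    exact ((continuous_apply i).comp continuous_fst).smul
      ((continuous_apply i).comp continuous_snd)
  have himg : g '' T = convexHull ℝ S := by
    apply Set.Subset.antisymm
    · rintro x ⟨⟨w, z⟩, ⟨hw, hz⟩, rfl⟩
      apply Convex.sum_mem (convex_convexHull ℝ S)
      · intro i _; exact hw.1 i
      · exact hw.2
      · intro i _; exact subset_convexHull ℝ S (hz i (Set.mem_univ i))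
    · intro x hx
      obtain ⟨ι, hι, z, w, hzS, hai, hw, hw1, hvz⟩ :=
        eq_pos_convex_span_of_mem_convexHull hx
      set n := Fintype.card ι with hn
      have hle : n ≤ N := by
        have h1 := hai.card_le_finrank_succ
        have hdim : Module.finrank ℝ (vectorSpan ℝ (Set.range z)) ≤ d :=
          le_trans (Submodule.finrank_le _) (by simp)
        simp only [hN]; omega
      obtain ⟨e⟩ : Nonempty (ι ≃ Fin n) := ⟨Fintype.equivFin ι⟩
      set w' : Fin n → ℝ := w ∘ e.symm with hw'
      set z' : Fin n → Fin d → ℝ := z ∘ e.symm with hz'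
      set W : Fin N → ℝ := fun j => if hj : (j : ℕ) < n then w' ⟨j, hj⟩ else 0 with hW
      set Z : Fin N → Fin d → ℝ := fun j => if hj : (j : ℕ) < n then z' ⟨j, hj⟩ else s₀ with hZ
      have hsumW : ∑ j, W j = 1 := by
        rw [hW, pad_sum hle w', ← hw1]
        exact Fintype.sum_equiv e.symm _ _ fun i => rfl
      have hsumWZ : ∑ j, W j • Z j = x := by
        have heq : ∀ j : Fin N, W j • Z j =
            if hj : (j : ℕ) < n then w' ⟨j, hj⟩ • z' ⟨j, hj⟩ else 0 := by
          intro j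
          by_cases hj : (j : ℕ) < n <;> simp [hW, hZ, hj]
        rw [Finset.sum_congr rfl fun j _ => heq j, pad_sum hle fun i => w' i • z' i, ← hvz]
        exact Fintype.sum_equiv e.symm _ _ fun i => rfl
      refine ⟨(W, Z), ⟨⟨fun j => ?_, hsumW⟩, fun j _ => ?_⟩, hsumWZ⟩
      · by_cases hj : (j : ℕ) < n
        · simp only [hW, dif_pos hj]; exact (hw _).le
        · simp [hW, hj]
      · by_cases hj : (j : ℕ) < n
        · simp only [hZ, dif_pos hj]; exact hzS ⟨_, rfl⟩
        · simp [hZ, hj, hs₀]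
  rw [← himg]
  exact hTc.image hgc

/-- Maximin value via convex hull: over the convex hull `C` of a nonempty compact set `S ⊆ ℝ^d`
of divergence vectors, the supremum of the minimum coordinate is attained, at a point that is a
convex combination of at most `d` points of `S`. -/
theorem stmt4 (d : ℕ) (hd : 0 < d) (S : Set (Fin d → ℝ)) (hS : S.Nonempty)
    (hSc : IsCompact S) :
    ∃ v ∈ convexHull ℝ S,
      (∀ u ∈ convexHull ℝ S, (⨅ i, u i) ≤ ⨅ i, v i) ∧
      ∃ n : ℕ, n ≤ d ∧ ∃ (wt : Fin n → ℝ) (z : Fin n → (Fin d → ℝ)),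
        (∀ i, z i ∈ S) ∧ (∀ i, 0 ≤ wt i) ∧ (∑ i, wt i = 1) ∧ v = ∑ i, wt i • z i := by
  classical
  have : Nonempty (Fin d) := ⟨⟨0, hd⟩⟩
  set f : (Fin d → ℝ) → ℝ := fun v => ⨅ i, v i with hf_def
  have hfin : ∀ v : Fin d → ℝ, f v = Finset.univ.inf' Finset.univ_nonempty v := by
    intro v; rw [Finset.inf'_univ_eq_ciInf]
  have hf : Continuous f := by
    have : Continuous fun v : Fin d → ℝ => Finset.univ.inf' Finset.univ_nonempty
        (fun i => v i) := by
      apply continuous_iff_continuousAt.2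
      intro x
      exact ContinuousAt.finset_inf'_apply _ (fun i _ => (continuous_apply i).continuousAt)
    simpa [funext hfin] using this
  have hCc : IsCompact (convexHull ℝ S) := isCompact_convexHull_fd hS hSc
  have hCne : (convexHull ℝ S).Nonempty := hS.mono (subset_convexHull ℝ S)
  obtain ⟨v, hvC, hvmax⟩ := hCc.exists_isMaxOn hCne hf.continuousOn
  have hmax : ∀ u ∈ convexHull ℝ S, (⨅ i, u i) ≤ ⨅ i, v i := fun u hu => hvmax hu
  refine ⟨v, hvC, hmax, ?_⟩
  obtain ⟨ι, hι, z, w, hzS, hai, hw, hw1, hvz⟩ :=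
    eq_pos_convex_span_of_mem_convexHull hvC
  set n := Fintype.card ι with hn
  have hle : n ≤ d + 1 := by
    have h1 := hai.card_le_finrank_succ
    have hdim : Module.finrank ℝ (vectorSpan ℝ (Set.range z)) ≤ d :=
      le_trans (Submodule.finrank_le _) (by simp)
    omega
  have hnd : n ≤ d := by
    by_contra hnd
    have hcard : n = d + 1 := by omega
    have htop : affineSpan ℝ (Set.range z) = ⊤ := by
      rw [hai.affineSpan_eq_top_iff_card_eq_finrank_add_one]
      simp [← hn, hcard]
    let b : AffineBasis ι ℝ (Fin d → ℝ) := ⟨z, hai, htop⟩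
    have hvmem : v ∈ interior (convexHull ℝ (Set.range z)) := by
      have hrng : (Set.range b) = Set.range z := rfl
      rw [← hrng, b.interior_convexHull]
      intro i
      have hw1' : ∑ i ∈ Finset.univ, w i = 1 := hw1
      have hco : Finset.univ.affineCombination ℝ z w = ∑ i, w i • z i :=
        Finset.univ.affineCombination_eq_linear_combination z w hw1'
      have hcoord : b.coord i v = w i := by
        rw [← hvz, ← hco]
        exact b.coord_apply_combination_of_mem (Finset.mem_univ i) hw1'
      show (0 : ℝ) < b.coord i v
      rw [hcoord]
      exact hw i
    have hvint : v ∈ interior (convexHull ℝ S) :=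
      interior_mono (convexHull_mono hzS) hvmem
    obtain ⟨ε, hε, hball⟩ := Metric.isOpen_iff.1 isOpen_interior v hvint
    set u : Fin d → ℝ := v + (ε / 2) • (fun _ : Fin d => (1 : ℝ)) with hu
    have huC : u ∈ convexHull ℝ S := by
      apply interior_subset
      apply hball
      rw [Metric.mem_ball, hu, dist_eq_norm]
      have h2 : v + (ε / 2) • (fun _ : Fin d => (1 : ℝ)) - v
          = (ε / 2) • (fun _ : Fin d => (1 : ℝ)) := by abel
      rw [h2, norm_smul]
      have h1 : ‖fun _ : Fin d => (1 : ℝ)‖ ≤ 1 := by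
        rw [pi_norm_le_iff_of_nonneg zero_le_one]
        intro i; simp
      calc ‖(ε / 2 : ℝ)‖ * ‖fun _ : Fin d => (1 : ℝ)‖
          ≤ ‖(ε / 2 : ℝ)‖ * 1 := mul_le_mul_of_nonneg_left h1 (norm_nonneg _)
        _ = ε / 2 := by rw [mul_one, Real.norm_eq_abs, abs_of_pos (by linarith)]
        _ < ε := by linarith
    have hlt : f v < f u := by
      have hle2 : f v + ε / 2 ≤ f u := by
        apply le_ciInf
        intro i
        have h3 : f v ≤ v i := ciInf_le (Set.Finite.bddBelow (Set.finite_range v)) i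
        have hui : u i = v i + ε / 2 := by simp [hu]
        rw [hui]; linarith
      linarith
    exact absurd (hmax u huC) (not_le.2 hlt)
  obtain ⟨e⟩ : Nonempty (ι ≃ Fin n) := ⟨Fintype.equivFin ι⟩
  refine ⟨n, hnd, w ∘ e.symm, z ∘ e.symm, ?_, ?_, ?_, ?_⟩
  · intro i; exact hzS ⟨e.symm i, rfl⟩
  · intro i; exact (hw _).le
  · rw [← hw1]; exact Fintype.sum_equiv e.symm _ _ (fun i => rfl)
  · rw [← hvz]; exact (Fintype.sum_equiv e.symm _ _ (fun i => rfl)).symm
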